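/- For every finite word w over {1,2}, the vector (x,y,z)^T = E_w (1,1,3)^T satisfies: x >= 0, y >= 0, z >= 0, z >= x, and x - 4y + 11z >= 0. -/

import Mathlib

open Matrix BigOperators

/-- The matrix `E_0`. -/
noncomputable def E0 : Matrix (Fin 3) (Fin 3) ℝ :=
  !![47/75, -1/25, -1/25; 14/75, 3/25, -2/25; 14/75, -2/25, 3/25]

/-- The matrix `E_1`. -/
noncomputable def E1 : Matrix (Fin 3) (Fin 3) ℝ :=
  !![3/25, 14/75, -2/25; -1/25, 47/75, -1/25; -2/25, 14/75, 3/25]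

/-- The matrix `E_2`. -/
noncomputable def E2 : Matrix (Fin 3) (Fin 3) ℝ :=
  !![3/25, -2/25, 14/75; -2/25, 3/25, 14/75; -1/25, -1/25, 47/75]

/-- `Emat i` is the matrix `E_i`. -/
noncomputable def Emat : Fin 3 → Matrix (Fin 3) (Fin 3) ℝ := ![E0, E1, E2]

/-- For a word `w = [w₁, ..., wₘ]`, `Eword w = E_{wₘ} * ⋯ * E_{w₁}`
(the empty word giving the identity matrix). -/
noncomputable def Eword (w : List (Fin 3)) : Matrix (Fin 3) (Fin 3) ℝ :=
  ((w.map Emat).reverse).prod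

def SGInv (x y z : ℝ) : Prop :=
  0 ≤ (994 : ℝ) * x + (145 : ℝ) * y + (-246 : ℝ) * z ∧
  0 ≤ (121 : ℝ) * x + (30 : ℝ) * y + (-39 : ℝ) * z ∧
  0 ≤ (73 : ℝ) * x + (24 : ℝ) * y + (-27 : ℝ) * z ∧
  0 ≤ (2860 : ℝ) * x + (1851 : ℝ) * y + (-1515 : ℝ) * z ∧
  0 ≤ (9893 : ℝ) * x + (10071 : ℝ) * y + (-6627 : ℝ) * z ∧
  0 ≤ (-1253 : ℝ) * x + (1708 : ℝ) * y + (-132 : ℝ) * z ∧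
  0 ≤ (-149 : ℝ) * x + (36 : ℝ) * y + (41 : ℝ) * z ∧
  0 ≤ (206 : ℝ) * x + (-153 : ℝ) * y + (253 : ℝ) * z ∧
  0 ≤ (7625 : ℝ) * x + (-3953 : ℝ) * y + (4805 : ℝ) * z ∧
  0 ≤ (3713 : ℝ) * x + (-1222 : ℝ) * y + (953 : ℝ) * z ∧
  0 ≤ (728 : ℝ) * x + (-167 : ℝ) * y + (88 : ℝ) * z

lemma sg_step1 (x y z : ℝ) (h : SGInv x y z) :
    SGInv (3/25*x + 14/75*y - 2/25*z) (-1/25*x + 47/75*y - 1/25*z) (-2/25*x + 14/75*y + 3/25*z) := by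
  obtain ⟨h1,h2,h3,h4,h5,h6,h7,h8,h9,h10,h11⟩ := h
  refine ⟨?_, ?_, ?_, ?_, ?_, ?_, ?_, ?_, ?_, ?_, ?_⟩ <;> linarith

lemma sg_step2 (x y z : ℝ) (h : SGInv x y z) :
    SGInv (3/25*x - 2/25*y + 14/75*z) (-2/25*x + 3/25*y + 14/75*z) (-1/25*x - 1/25*y + 47/75*z) := by
  obtain ⟨h1,h2,h3,h4,h5,h6,h7,h8,h9,h10,h11⟩ := h
  refine ⟨?_, ?_, ?_, ?_, ?_, ?_, ?_, ?_, ?_, ?_, ?_⟩ <;> linarith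

lemma sg_mulvec1 (u : Fin 3 → ℝ) : Emat 1 *ᵥ u =
    ![3/25 * u 0 + 14/75 * u 1 - 2/25 * u 2,
      -1/25 * u 0 + 47/75 * u 1 - 1/25 * u 2,
      -2/25 * u 0 + 14/75 * u 1 + 3/25 * u 2] := by
  funext i
  fin_cases i <;>
    simp [Emat, E1, Matrix.mulVec, dotProduct, Fin.sum_univ_three] <;> ring

lemma sg_mulvec2 (u : Fin 3 → ℝ) : Emat 2 *ᵥ u =
    ![3/25 * u 0 - 2/25 * u 1 + 14/75 * u 2,
      -2/25 * u 0 + 3/25 * u 1 + 14/75 * u 2,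
      -1/25 * u 0 - 1/25 * u 1 + 47/75 * u 2] := by
  funext i
  fin_cases i <;>
    simp [Emat, E2, Matrix.mulVec, dotProduct, Fin.sum_univ_three] <;> ring

lemma sg_key (w : List (Fin 3)) (hw : ∀ i ∈ w, i = 1 ∨ i = 2) (u : Fin 3 → ℝ)
    (hu : SGInv (u 0) (u 1) (u 2)) :
    SGInv ((Eword w *ᵥ u) 0) ((Eword w *ᵥ u) 1) ((Eword w *ᵥ u) 2) := by
  induction w generalizing u with
  | nil => simpa [Eword] using hu
  | cons a w ih =>
    have hE : Eword (a :: w) = Eword w * Emat a := by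
      simp [Eword, List.prod_append]
    rw [hE, ← mulVec_mulVec]
    refine ih (fun i hi => hw i (List.mem_cons_of_mem a hi)) _ ?_
    rcases hw a List.mem_cons_self with h | h <;> subst h
    · rw [sg_mulvec1]
      simpa using sg_step1 (u 0) (u 1) (u 2) hu
    · rw [sg_mulvec2]
      simpa using sg_step2 (u 0) (u 1) (u 2) hu

/-- For every finite word `w` over `{1,2}`, the vector `(x,y,z)ᵀ = E_w (1,1,3)ᵀ`
satisfies `x ≥ 0`, `y ≥ 0`, `z ≥ 0`, `z ≥ x`, and `x - 4y + 11z ≥ 0`. -/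
theorem stmt_5 (w : List (Fin 3)) (hw : ∀ i ∈ w, i = 1 ∨ i = 2) :
    0 ≤ (Eword w *ᵥ ![1, 1, 3]) 0 ∧
    0 ≤ (Eword w *ᵥ ![1, 1, 3]) 1 ∧
    0 ≤ (Eword w *ᵥ ![1, 1, 3]) 2 ∧
    (Eword w *ᵥ ![1, 1, 3]) 0 ≤ (Eword w *ᵥ ![1, 1, 3]) 2 ∧
    0 ≤ (Eword w *ᵥ ![1, 1, 3]) 0 - 4 * (Eword w *ᵥ ![1, 1, 3]) 1
        + 11 * (Eword w *ᵥ ![1, 1, 3]) 2 := by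
  have hu : SGInv ((![1, 1, 3] : Fin 3 → ℝ) 0) ((![1, 1, 3] : Fin 3 → ℝ) 1)
      ((![1, 1, 3] : Fin 3 → ℝ) 2) := by
    simp only [Matrix.cons_val_zero, Matrix.cons_val_one, Matrix.head_cons,
      Matrix.cons_val_two, Matrix.tail_cons]
    unfold SGInv
    norm_num
  obtain ⟨h1,h2,h3,h4,h5,h6,h7,h8,h9,h10,h11⟩ := sg_key w hw ![1, 1, 3] hu
  refine ⟨by linarith, by linarith, by linarith, by linarith, by linarith⟩
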